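/- Let G be a simple graph, let k be a natural number, and suppose the girth of G is strictly greater than 2k + 1 (as an extended natural number). Then for every vertex v of G, the subgraph of G induced on the set of vertices at graph distance at most k from v is acyclic. -/

import Mathlib

open SimpleGraph Walk

namespace InduceBallAux

variable {V : Type*}

/-- On a shortest walk, every support vertex lies on a geodesic:
the distances to the two endpoints add up. -/
lemma edist_add_edist_of_mem_support {G : SimpleGraph V} {x a : V}
    (p : G.Walk x a) (hp : (p.length : ℕ∞) = G.edist x a) :
    ∀ w ∈ p.support, G.edist x w + G.edist w a = G.edist x a := by
  induction p with
  | nil =>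
    intro w hw
    simp only [Walk.support_nil, List.mem_singleton] at hw
    subst hw
    simp [SimpleGraph.edist_self]
  | @cons x y a h q ih =>
    have hlen : ((q.length + 1 : ℕ) : ℕ∞) = G.edist x a := by
      simpa [Walk.length_cons] using hp
    have hxy : G.edist x y = 1 := SimpleGraph.edist_eq_one_iff_adj.mpr h
    have h2 : G.edist y a ≤ (q.length : ℕ∞) := SimpleGraph.edist_le q
    have h1 : G.edist x a ≤ 1 + G.edist y a := by
      calc G.edist x a ≤ G.edist x y + G.edist y a := SimpleGraph.edist_triangle
        _ = 1 + G.edist y a := by rw [hxy]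
    have hq : (q.length : ℕ∞) = G.edist y a := by
      have hne : G.edist y a ≠ ⊤ := by
        intro ht
        rw [ht] at h2
        exact (ENat.coe_lt_top q.length).ne (top_le_iff.mp h2)
      lift G.edist y a to ℕ using hne with n hn
      have h1' : q.length + 1 ≤ 1 + n := by
        rw [← hlen] at h1
        exact_mod_cast h1
      have h2' : n ≤ q.length := by exact_mod_cast h2
      have : n = q.length := by omega
      exact_mod_cast this.symm
    have hxa : G.edist x a = 1 + G.edist y a := by
      rw [← hq, ← hlen]
      push_cast
      ring
    intro w hw
    rw [Walk.support_cons, List.mem_cons] at hw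
    rcases hw with rfl | hw
    · simp [SimpleGraph.edist_self]
    · have IH := ih hq w hw
      refine le_antisymm ?_ SimpleGraph.edist_triangle
      calc G.edist x w + G.edist w a
          ≤ (G.edist x y + G.edist y w) + G.edist w a :=
            add_le_add_left SimpleGraph.edist_triangle _
        _ = 1 + (G.edist y w + G.edist w a) := by rw [hxy]; ring
        _ = 1 + G.edist y a := by rw [IH]
        _ = G.edist x a := hxa.symm

/-- Case of an edge with both endpoints at the same distance from `v`:
gives a cycle of odd length `≤ 2·dist + 1`. -/
lemma egirth_le_of_eq {G : SimpleGraph V} {v a b : V} (hab : G.Adj a b)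
    (p : G.Walk v a) (q : G.Walk v b)
    (hp : (p.length : ℕ∞) = G.edist v a) (hq : (q.length : ℕ∞) = G.edist v b)
    (heq : G.edist v a = G.edist v b) :
    G.egirth ≤ (p.length + q.length + 1 : ℕ) := by
  classical
  have hvbne : G.edist v b ≠ ⊤ := by rw [← hq]; exact ENat.coe_ne_top _
  have hvane : G.edist v a ≠ ⊤ := by rw [← hp]; exact ENat.coe_ne_top _
  set R : G.Walk a b := p.reverse.append q with hR
  have hnotin : s(a, b) ∉ R.edges := by
    intro hmem
    rw [hR, Walk.edges_append, List.mem_append, Walk.edges_reverse,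
      List.mem_reverse] at hmem
    rcases hmem with hmem | hmem
    · have hb : b ∈ p.support := Walk.snd_mem_support_of_mem_edges p hmem
      have := edist_add_edist_of_mem_support p hp b hb
      rw [← heq] at this
      nth_rewrite 2 [show G.edist v a = G.edist v a + 0 by simp] at this
      have h0 : G.edist b a = 0 := WithTop.add_left_cancel hvane this
      exact hab.ne' (SimpleGraph.edist_eq_zero_iff.mp h0)
    · have ha : a ∈ q.support := Walk.fst_mem_support_of_mem_edges q hmem
      have := edist_add_edist_of_mem_support q hq a ha
      rw [heq] at this
      nth_rewrite 2 [show G.edist v b = G.edist v b + 0 by simp] at this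
      have h0 : G.edist a b = 0 := WithTop.add_left_cancel hvbne this
      exact hab.ne (SimpleGraph.edist_eq_zero_iff.mp h0)
  have hnotin' : s(b, a) ∉ (R.toPath : G.Walk a b).edges := by
    intro hmem
    rw [Sym2.eq_swap] at hmem
    exact hnotin (Walk.edges_toPath_subset R hmem)
  have hcyc := SimpleGraph.Path.cons_isCycle R.toPath hab.symm hnotin'
  have hle := SimpleGraph.le_egirth.mp le_rfl _ _ hcyc
  refine hle.trans ?_
  have : (Walk.cons hab.symm (R.toPath : G.Walk a b)).length ≤ p.length + q.length + 1 := by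
    rw [Walk.length_cons]
    have h1 : (R.toPath : G.Walk a b).length ≤ R.length := Walk.length_bypass_le R
    have h2 : R.length = p.length + q.length := by
      rw [hR, Walk.length_append, Walk.length_reverse]
    omega
  exact_mod_cast this

/-- Case of a vertex `a` with two distinct neighbors `b, b'` strictly closer to `v`:
gives a cycle of length `≤ dist b + dist b' + 2`. -/
lemma egirth_le_of_two_neighbors {G : SimpleGraph V} {v a b b' : V}
    (hab : G.Adj a b) (hab' : G.Adj a b') (hne : b ≠ b')
    (p : G.Walk v b) (p' : G.Walk v b')
    (hp : (p.length : ℕ∞) = G.edist v b) (hp' : (p'.length : ℕ∞) = G.edist v b')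
    (hb : G.edist v b < G.edist v a) (hb' : G.edist v b' < G.edist v a) :
    G.egirth ≤ (p.length + p'.length + 2 : ℕ) := by
  classical
  set R : G.Walk b b' := p.reverse.append p' with hR
  have haR : a ∉ R.support := by
    intro haR
    rw [hR, Walk.mem_support_append_iff, Walk.support_reverse, List.mem_reverse] at haR
    rcases haR with haR | haR
    · have := edist_add_edist_of_mem_support p hp a haR
      have h1 : G.edist v a ≤ G.edist v b := this ▸ le_self_add
      exact absurd h1 (not_le.mpr hb)
    · have := edist_add_edist_of_mem_support p' hp' a haR
      have h1 : G.edist v a ≤ G.edist v b' := this ▸ le_self_add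
      exact absurd h1 (not_le.mpr hb')
  have haP : a ∉ (R.toPath : G.Walk b b').support :=
    fun hh => haR (Walk.support_toPath_subset R hh)
  have hP2 : (Walk.cons hab (R.toPath : G.Walk b b')).IsPath :=
    (R.toPath).2.cons haP
  have hedge : s(b', a) ∉ (Walk.cons hab (R.toPath : G.Walk b b')).edges := by
    rw [Walk.edges_cons, List.mem_cons]
    rintro (h1 | h2)
    · rw [Sym2.eq_iff] at h1
      rcases h1 with ⟨h3, h4⟩ | ⟨h3, h4⟩
      · exact hab'.ne' h3
      · exact hne h3.symm
    · exact haP (Walk.snd_mem_support_of_mem_edges _ h2)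
  have hcyc := SimpleGraph.Path.cons_isCycle
    ⟨Walk.cons hab (R.toPath : G.Walk b b'), hP2⟩ hab'.symm hedge
  have hle := SimpleGraph.le_egirth.mp le_rfl _ _ hcyc
  refine hle.trans ?_
  have : (Walk.cons hab'.symm (Walk.cons hab (R.toPath : G.Walk b b'))).length
      ≤ p.length + p'.length + 2 := by
    rw [Walk.length_cons, Walk.length_cons]
    have h1 : (R.toPath : G.Walk b b').length ≤ R.length := Walk.length_bypass_le R
    have h2 : R.length = p.length + p'.length := by
      rw [hR, Walk.length_append, Walk.length_reverse]
    omega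
  exact_mod_cast this

/-- Every vertex of a cycle has two distinct neighbors along the cycle. -/
lemma exists_two_neighbors {G : SimpleGraph V} {a : V} (C : G.Walk a a) (hC : C.IsCycle) :
    ∃ b b', b ≠ b' ∧ G.Adj a b ∧ G.Adj a b' ∧ s(a, b) ∈ C.edges ∧ s(a, b') ∈ C.edges ∧
      b ∈ C.support ∧ b' ∈ C.support := by
  cases C with
  | nil =>
    have := hC.three_le_length
    simp at this
  | @cons _ x _ h q =>
    have h3 : 3 ≤ q.length + 1 := by
      have := hC.three_le_length
      simpa using this
    have hnodup : (Walk.cons h q).edges.Nodup := hC.isTrail.edges_nodup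
    rw [Walk.edges_cons, List.nodup_cons] at hnodup
    cases hqr : q.reverse with
    | nil =>
      exfalso
      have : q.length = 0 := by
        have := congrArg Walk.length hqr
        simpa [Walk.length_reverse] using this
      omega
    | @cons _ b' _ h2 r =>
      have hb'q : s(a, b') ∈ q.edges := by
        have : s(a, b') ∈ q.reverse.edges := by
          rw [hqr, Walk.edges_cons]; exact List.mem_cons_self
        rwa [Walk.edges_reverse, List.mem_reverse] at this
      have hb'supp : b' ∈ q.support := by
        have : b' ∈ q.reverse.support := by
          rw [hqr, Walk.support_cons]
          exact List.mem_cons_of_mem _ r.start_mem_support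
        rwa [Walk.support_reverse, List.mem_reverse] at this
      refine ⟨x, b', ?_, h, h2, ?_, ?_, ?_, ?_⟩
      · rintro rfl
        exact hnodup.1 hb'q
      · rw [Walk.edges_cons]; exact List.mem_cons_self
      · rw [Walk.edges_cons]; exact List.mem_cons_of_mem _ hb'q
      · rw [Walk.support_cons]
        exact List.mem_cons_of_mem _ q.start_mem_support
      · rw [Walk.support_cons]
        exact List.mem_cons_of_mem _ hb'supp

lemma mem_support_of_mem_rotate [DecidableEq V] {G : SimpleGraph V} {u a w : V} {c : G.Walk u u}
    (h : a ∈ c.support) (hw : w ∈ (c.rotate a h).support) : w ∈ c.support := by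
  rw [Walk.support_eq_cons, List.mem_cons] at hw
  rcases hw with rfl | hw
  · exact h
  · have := (Walk.support_rotate c _ h).perm.mem_iff.mp hw
    rw [Walk.support_eq_cons (p := c)]
    exact List.mem_cons_of_mem _ this

end InduceBallAux

open InduceBallAux

/-- If the girth of `G` is strictly greater than `2k + 1`, then for every vertex `v`
the subgraph induced on the ball of radius `k` around `v` is acyclic. -/
theorem induce_ball_isAcyclic_of_girth {V : Type*} (G : SimpleGraph V) (k : ℕ)
    (hg : 2 * (k : ℕ∞) + 1 < G.egirth) (v : V) :
    (G.induce {w : V | G.edist v w ≤ (k : ℕ∞)}).IsAcyclic := by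
  classical
  intro u c hc
  set S : Set V := {w : V | G.edist v w ≤ (k : ℕ∞)} with hS
  let f : G.induce S ↪g G := SimpleGraph.Embedding.induce S
  set c' := c.map f.toHom with hc'def
  have hc' : c'.IsCycle := hc.map (by exact f.injective)
  have hball : ∀ w ∈ c'.support, G.edist v w ≤ (k : ℕ∞) := by
    intro w hw
    rw [hc'def, Walk.support_map] at hw
    obtain ⟨x, hx, rfl⟩ := List.mem_map.mp hw
    exact x.2
  have hktop : ((k : ℕ∞)) < ⊤ := ENat.coe_lt_top k
  have hgeo : ∀ w ∈ c'.support, ∃ p : G.Walk v w, (p.length : ℕ∞) = G.edist v w := by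
    intro w hw
    obtain ⟨p, hp⟩ := SimpleGraph.exists_walk_of_edist_ne_top
      (u := v) (v := w) ((hball w hw).trans_lt hktop).ne
    exact ⟨p, by exact_mod_cast hp⟩
  by_cases hcase : ∃ x y, s(x, y) ∈ c'.edges ∧ G.edist v x = G.edist v y
  · obtain ⟨x, y, he, hxy⟩ := hcase
    have hadj : G.Adj x y := c'.adj_of_mem_edges he
    have hxs : x ∈ c'.support := c'.fst_mem_support_of_mem_edges he
    have hys : y ∈ c'.support := c'.snd_mem_support_of_mem_edges he
    obtain ⟨p, hp⟩ := hgeo x hxs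
    obtain ⟨q, hq⟩ := hgeo y hys
    have hle := egirth_le_of_eq hadj p q hp hq hxy
    have hpk : p.length ≤ k := by
      have : (p.length : ℕ∞) ≤ (k : ℕ∞) := hp ▸ hball x hxs
      exact_mod_cast this
    have hqk : q.length ≤ k := by
      have : (q.length : ℕ∞) ≤ (k : ℕ∞) := hq ▸ hball y hys
      exact_mod_cast this
    have hfin : G.egirth ≤ 2 * (k : ℕ∞) + 1 := by
      refine hle.trans ?_
      have : ((p.length + q.length + 1 : ℕ) : ℕ∞) ≤ ((2 * k + 1 : ℕ) : ℕ∞) := by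
        exact_mod_cast Nat.le_of_lt_succ (by omega)
      refine this.trans ?_
      push_cast
      ring_nf
      exact le_rfl
    exact absurd hfin (not_le.mpr hg)
  · push_neg at hcase
    -- pick a vertex of the cycle at maximal distance from v
    obtain ⟨a, haS', hamax⟩ := Finset.exists_max_image c'.support.toFinset (G.edist v)
      ⟨_, List.mem_toFinset.mpr c'.start_mem_support⟩
    have haS : a ∈ c'.support := List.mem_toFinset.mp haS'
    have hamax' : ∀ w ∈ c'.support, G.edist v w ≤ G.edist v a :=
      fun w hw => hamax w (List.mem_toFinset.mpr hw)
    obtain ⟨b, b', hbb', hab, hab', heb, heb', hbs, hbs'⟩ :=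
      exists_two_neighbors (c'.rotate a haS) (hc'.rotate haS)
    have hebc : s(a, b) ∈ c'.edges := (c'.rotate_edges a haS).perm.mem_iff.mp heb
    have hebc' : s(a, b') ∈ c'.edges := (c'.rotate_edges a haS).perm.mem_iff.mp heb'
    have hbsc : b ∈ c'.support := mem_support_of_mem_rotate haS hbs
    have hbsc' : b' ∈ c'.support := mem_support_of_mem_rotate haS hbs'
    have hblt : G.edist v b < G.edist v a :=
      (hamax' b hbsc).lt_of_ne (fun hh => hcase a b hebc hh.symm)
    have hblt' : G.edist v b' < G.edist v a :=
      (hamax' b' hbsc').lt_of_ne (fun hh => hcase a b' hebc' hh.symm)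
    obtain ⟨p, hp⟩ := hgeo b hbsc
    obtain ⟨p', hp'⟩ := hgeo b' hbsc'
    have hle := egirth_le_of_two_neighbors hab hab' hbb' p p' hp hp' hblt hblt'
    have hpk : p.length < k := by
      have hak : G.edist v a ≤ (k : ℕ∞) := hball a haS
      have : (p.length : ℕ∞) < (k : ℕ∞) := lt_of_lt_of_le (hp ▸ hblt) hak
      exact_mod_cast this
    have hpk' : p'.length < k := by
      have hak : G.edist v a ≤ (k : ℕ∞) := hball a haS
      have : (p'.length : ℕ∞) < (k : ℕ∞) := lt_of_lt_of_le (hp' ▸ hblt') hak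
      exact_mod_cast this
    have hfin : G.egirth ≤ 2 * (k : ℕ∞) + 1 := by
      refine hle.trans ?_
      have : ((p.length + p'.length + 2 : ℕ) : ℕ∞) ≤ ((2 * k + 1 : ℕ) : ℕ∞) := by
        exact_mod_cast (by omega : p.length + p'.length + 2 ≤ 2 * k + 1)
      refine this.trans ?_
      push_cast
      ring_nf
      exact le_rfl
    exact absurd hfin (not_le.mpr hg)
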